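/- Let I ⊂ ℝ be open, y₀ ∈ I, and c : I → ℝ continuous with c(y₀) = 0 and c(y) ≠ 0 for y ≠ y₀. Consider the ℤ-action on M = I × ℝ given by n·(y,p) = (y, p + n c(y)). Then the quotient space M/ℤ is not Hausdorff: the images of (y₀, p₁) and (y₀, p₂) with p₁ ≠ p₂ do not have disjoint neighbourhoods. -/
import Mathlib


open Set Real

/-- Non-Hausdorffness of the quotient of `M = I × ℝ` by the `ℤ`-action
`n·(y,p) = (y, p + n c(y))`, where `c` is continuous on the open set `I`, vanishes
exactly at `y₀ ∈ I`: the images in the quotient of `(y₀,p₁)` and `(y₀,p₂)` with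
`p₁ ≠ p₂` cannot be separated, i.e. any two open saturated sets containing them
respectively must intersect. -/
theorem stmt5 (I : Set ℝ) (hI : IsOpen I) (y₀ : ℝ) (hy₀ : y₀ ∈ I)
    (c : ℝ → ℝ) (hc : ContinuousOn c I) (hc0 : c y₀ = 0)
    (hcne : ∀ y ∈ I, y ≠ y₀ → c y ≠ 0)
    (p₁ p₂ : ℝ) (hp : p₁ ≠ p₂) :
    ∀ U V : Set (ℝ × ℝ), IsOpen U → IsOpen V →
      U ⊆ I ×ˢ (univ : Set ℝ) → V ⊆ I ×ˢ (univ : Set ℝ) →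
      (∀ z ∈ U, ∀ n : ℤ, ((z : ℝ × ℝ).1, z.2 + n * c z.1) ∈ U) →
      (∀ z ∈ V, ∀ n : ℤ, ((z : ℝ × ℝ).1, z.2 + n * c z.1) ∈ V) →
      (y₀, p₁) ∈ U → (y₀, p₂) ∈ V → (U ∩ V).Nonempty := by
  intro U V hU hV hUI hVI hUsat hVsat h1 h2
  -- ball around (y₀,p₁) inside U
  obtain ⟨ε₁, hε₁, hball₁⟩ := Metric.isOpen_iff.mp hU _ h1
  -- ball around (y₀,p₂) inside V
  obtain ⟨ε₂, hε₂, hball₂⟩ := Metric.isOpen_iff.mp hV _ h2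
  -- continuity of c at y₀ within I
  obtain ⟨δc, hδc, hδcont⟩ := Metric.continuousWithinAt_iff.mp (hc.continuousWithinAt hy₀) ε₂ hε₂
  -- openness of I
  obtain ⟨δI, hδI, hballI⟩ := Metric.isOpen_iff.mp hI _ hy₀
  set δ := min (min δI ε₂) (min δc ε₁) with hδdef
  have hδpos : 0 < δ := lt_min (lt_min hδI hε₂) (lt_min hδc hε₁)
  set y := y₀ + δ / 2 with hydef
  have hdy : |y - y₀| = δ / 2 := by
    rw [hydef]; ring_nf
    rw [abs_of_pos (by linarith)]
  have hyI : y ∈ I := hballI (by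
    simp only [Metric.mem_ball, Real.dist_eq, hdy]
    have : δ ≤ δI := le_trans (min_le_left _ _) (min_le_left _ _)
    linarith)
  have hyne : y ≠ y₀ := by
    intro h
    have : δ / 2 = 0 := by rw [← hdy, h, sub_self, abs_zero]
    linarith
  have hcy : c y ≠ 0 := hcne y hyI hyne
  have hcy2 : |c y| < ε₂ := by
    have := hδcont hyI (by
      simp only [Real.dist_eq, hdy]
      have : δ ≤ δc := le_trans (min_le_right _ _) (min_le_left _ _)
      linarith)
    simpa [Real.dist_eq, hc0] using this
  -- (y, p₁) ∈ U
  have hyU : (y, p₁) ∈ U := hball₁ (by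
    simp only [Metric.mem_ball, Prod.dist_eq, Real.dist_eq, hdy, sub_self, abs_zero]
    have : δ ≤ ε₁ := le_trans (min_le_right _ _) (min_le_right _ _)
    simp only [max_lt_iff]
    constructor <;> linarith)
  -- choose n = round ((p₂ - p₁) / c y)
  set n : ℤ := round ((p₂ - p₁) / c y) with hn
  refine ⟨(y, p₁ + (n : ℝ) * c y), hUsat _ hyU n, hball₂ ?_⟩
  have hr : |((n : ℝ)) - (p₂ - p₁) / c y| ≤ 1 / 2 := by
    rw [abs_sub_comm]; simpa using abs_sub_round ((p₂ - p₁) / c y)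
  have hkey : |p₁ + (n : ℝ) * c y - p₂| < ε₂ := by
    have h1 : p₁ + (n : ℝ) * c y - p₂ = ((n : ℝ) - (p₂ - p₁) / c y) * c y := by
      field_simp
      ring
    rw [h1, abs_mul]
    calc |((n : ℝ)) - (p₂ - p₁) / c y| * |c y| ≤ (1 / 2) * |c y| := by
          apply mul_le_mul_of_nonneg_right hr (abs_nonneg _)
      _ < ε₂ := by
          have hpos : 0 < |c y| := abs_pos.mpr hcy
          nlinarith
  simp only [Metric.mem_ball, Prod.dist_eq, Real.dist_eq, hdy, max_lt_iff]
  have hδε₂ : δ ≤ ε₂ := le_trans (min_le_left _ _) (min_le_right _ _)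
  constructor
  · linarith
  · exact hkey
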